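/- Let N ∈ {1,2,3}, 2 < p < (2N+8)/N with p ≠ 4, a, b > 0, and let Q be a positive constant (representing |Q_p|₂). Suppose c ↦ m_c is a family of positive reals indexed by c > 0 satisfying a + b·m_c² = (N(p-2)/4)·c^{(2N-p(N-2))/2}·m_c^{(N(p-2)-4)/2}/Q^{p-2} for all large c, and suppose m_c → +∞ as c → +∞. If 2 < p < 4, then m_c/c → 0 as c → +∞. -/

import Mathlib

open Filter

theorem stmt3 (N : ℕ) (hN1 : 1 ≤ N) (hN3 : N ≤ 3) (p a b Q : ℝ)
    (hp2 : 2 < p) (hp4 : p < 4) (hp : p < (2 * (N : ℝ) + 8) / N)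
    (ha : 0 < a) (hb : 0 < b) (hQ : 0 < Q)
    (m : ℝ → ℝ) (hmpos : ∀ c > (0 : ℝ), 0 < m c)
    (hid : ∀ᶠ c in atTop, a + b * (m c) ^ 2 =
      ((N : ℝ) * (p - 2) / 4) * c ^ ((2 * (N : ℝ) - p * ((N : ℝ) - 2)) / 2) *
        (m c) ^ (((N : ℝ) * (p - 2) - 4) / 2) / Q ^ (p - 2))
    (hminf : Tendsto m atTop atTop) :
    Tendsto (fun c => m c / c) atTop (nhds 0) := by
  have hN0 : (0:ℝ) < (N:ℝ) := by exact_mod_cast hN1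
  set α : ℝ := (2 * (N : ℝ) - p * ((N : ℝ) - 2)) / 2 with hαdef
  set β : ℝ := ((N : ℝ) * (p - 2) - 4) / 2 with hβdef
  set δ : ℝ := (2 * (N:ℝ) + 8 - (N:ℝ) * p) / 2 with hδdef
  have hNp : (N:ℝ) * p < 2 * (N:ℝ) + 8 := by
    have := (lt_div_iff₀ hN0).mp hp
    linarith
  have hδ : 0 < δ := by rw [hδdef]; linarith
  have hQp : 0 < Q ^ (p - 2) := Real.rpow_pos_of_pos hQ _
  set KQ : ℝ := (N : ℝ) * (p - 2) / 4 / Q ^ (p - 2) with hKQdef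
  have hKQ : 0 < KQ := by
    apply div_pos _ hQp
    have : 0 < (N:ℝ) * (p - 2) := by nlinarith
    linarith
  set K : ℝ := KQ / b with hKdef
  have hK : 0 < K := div_pos hKQ hb
  have key : ∀ᶠ c in atTop, (m c / c) ^ δ ≤ K * c ^ (p - 4) := by
    filter_upwards [hid, eventually_gt_atTop 0] with c hc hc0
    have hm := hmpos c hc0
    have h2 : (m c) ^ β * (m c) ^ δ = (m c) ^ 2 := by
      rw [← Real.rpow_add hm, show β + δ = ((2:ℕ):ℝ) by push_cast; rw [hβdef, hδdef]; ring,
        Real.rpow_natCast]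
    have h3 : b * ((m c) ^ β * (m c) ^ δ) ≤ KQ * c ^ α * (m c) ^ β := by
      rw [h2]
      have : b * (m c) ^ 2 ≤ a + b * (m c) ^ 2 := by linarith
      rw [hc] at this
      calc b * (m c) ^ 2 ≤ (N : ℝ) * (p - 2) / 4 * c ^ α * (m c) ^ β / Q ^ (p - 2) := this
        _ = KQ * c ^ α * (m c) ^ β := by rw [hKQdef]; ring
    have hmβ : 0 < (m c) ^ β := Real.rpow_pos_of_pos hm β
    have h4 : b * (m c) ^ δ ≤ KQ * c ^ α := by
      have := (mul_le_mul_iff_left₀ hmβ).mp (by linarith [h3] : b * (m c) ^ δ * (m c) ^ β ≤ KQ * c ^ α * (m c) ^ β)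
      exact this
    have h5 : (m c) ^ δ ≤ K * c ^ α := by
      rw [hKdef, div_mul_eq_mul_div, le_div_iff₀ hb, mul_comm]
      linarith
    have hcδ : 0 < c ^ δ := Real.rpow_pos_of_pos hc0 δ
    rw [Real.div_rpow hm.le hc0.le]
    rw [div_le_iff₀ hcδ]
    calc (m c) ^ δ ≤ K * c ^ α := h5
      _ = K * c ^ (p - 4) * c ^ δ := by
          rw [mul_assoc, ← Real.rpow_add hc0]
          congr 2
          rw [hαdef, hδdef]; ring
  have h0 : ∀ᶠ c in atTop, 0 ≤ (fun c => (m c / c) ^ δ) c := by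
    filter_upwards [eventually_gt_atTop 0] with c hc0
    exact Real.rpow_nonneg (div_nonneg (hmpos c hc0).le hc0.le) δ
  have hg : Tendsto (fun c : ℝ => K * c ^ (p - 4)) atTop (nhds 0) := by
    have h1 := (tendsto_rpow_neg_atTop (show (0:ℝ) < 4 - p by linarith)).const_mul K
    rw [mul_zero] at h1
    convert h1 using 2
    ring_nf
  have hδ0 : Tendsto (fun c => (m c / c) ^ δ) atTop (nhds 0) := squeeze_zero' h0 key hg
  have hfin := hδ0.rpow_const (p := 1 / δ) (Or.inr (by positivity))
  rw [Real.zero_rpow (by positivity : (1:ℝ)/δ ≠ 0)] at hfin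
  apply hfin.congr'
  filter_upwards [eventually_gt_atTop 0] with c hc0
  rw [← Real.rpow_mul (div_nonneg (hmpos c hc0).le hc0.le)]
  rw [mul_one_div, div_self hδ.ne', Real.rpow_one]
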